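/- arXiv:2202.02036 — 3 statements merged into one kernel-verified Lean document; each statement's English description precedes it below -/
import Mathlib

section
/- Let f : ℝⁿ → ℝ be convex, differentiable, and L-smooth, with a minimizer x*. Then the gradient descent iterates x_{k+1} = x_k − (1/L)·∇f(x_k) satisfy f(x_k) − f(x*) ≤ (L/(2k))·‖x_0 − x*‖² for all k ≥ 1. -/
open InnerProductSpace intervalIntegral
open scoped RealInnerProductSpace

variable {E : Type*} [NormedAddCommGroup E] [InnerProductSpace ℝ E] [CompleteSpace E]

/-- the curve t ↦ x + t • (y - x) has derivative y - x -/
lemma line_hasDerivAt (x y : E) (t : ℝ) :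
    HasDerivAt (fun s : ℝ => x + s • (y - x)) (y - x) t := by
  simpa using ((hasDerivAt_id t).smul_const (y - x)).const_add x

lemma comp_line_hasDerivAt {f : E → ℝ} {f' : E → E}
    (hgrad : ∀ x, HasGradientAt f (f' x) x) (x y : E) (t : ℝ) :
    HasDerivAt (fun s : ℝ => f (x + s • (y - x)))
      ⟪f' (x + t • (y - x)), y - x⟫ t := by
  have h1 : HasFDerivAt f (toDual ℝ E (f' (x + t • (y - x)))) (x + t • (y - x)) :=
    (hasGradientAt_iff_hasFDerivAt).1 (hgrad _)
  have := h1.comp_hasDerivAt t (line_hasDerivAt x y t)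
  simp at this
  exact this

/-- gradient inequality for convex functions -/
lemma convex_grad_ineq {f : E → ℝ} {f' : E → E}
    (hgrad : ∀ x, HasGradientAt f (f' x) x)
    (hconv : ConvexOn ℝ Set.univ f) (x y : E) :
    f x + ⟪f' x, y - x⟫ ≤ f y := by
  have hg : ConvexOn ℝ Set.univ (fun s : ℝ => f (x + s • (y - x))) := by
    have h := hconv.comp_affineMap (AffineMap.lineMap x y : ℝ →ᵃ[ℝ] E)
    simp only [Set.preimage_univ] at h
    have heq : (fun s : ℝ => f (x + s • (y - x))) = f ∘ (AffineMap.lineMap x y : ℝ →ᵃ[ℝ] E) := by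
      funext s
      have hl : (AffineMap.lineMap x y : ℝ →ᵃ[ℝ] E) s = x + s • (y - x) := by
        rw [AffineMap.lineMap_apply]
        simp only [vsub_eq_sub, vadd_eq_add]
        abel
      simp [Function.comp, hl]
    rw [heq]
    exact h
  have hd := comp_line_hasDerivAt hgrad x y 0
  simp only [zero_smul, add_zero] at hd
  have := hg.le_slope_of_hasDerivAt (Set.mem_univ (0:ℝ)) (Set.mem_univ (1:ℝ))
    zero_lt_one hd
  simp [slope_def_field] at this
  linarith

/-- descent lemma for L-smooth functions -/
lemma descent_lemma {f : E → ℝ} {f' : E → E}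
    (hgrad : ∀ x, HasGradientAt f (f' x) x)
    {L : ℝ} (hL : 0 < L) (hlip : ∀ x y, ‖f' x - f' y‖ ≤ L * ‖x - y‖)
    (x y : E) :
    f y ≤ f x + ⟪f' x, y - x⟫ + L / 2 * ‖y - x‖ ^ 2 := by
  have hcontf' : Continuous f' := by
    have : LipschitzWith L.toNNReal f' := by
      apply LipschitzWith.of_dist_le_mul
      intro a b
      rw [dist_eq_norm, dist_eq_norm]
      calc ‖f' a - f' b‖ ≤ L * ‖a - b‖ := hlip a b
        _ ≤ L.toNNReal * ‖a - b‖ := by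
            gcongr
            exact Real.le_coe_toNNReal L
    exact this.continuous
  set g' : ℝ → ℝ := fun t => ⟪f' (x + t • (y - x)), y - x⟫ with hg'
  have hcont : Continuous g' := by
    apply Continuous.inner
    · exact hcontf'.comp (by continuity)
    · exact continuous_const
  have hint : IntervalIntegrable g' MeasureTheory.volume 0 1 :=
    hcont.intervalIntegrable 0 1
  have heq : ∫ t in (0:ℝ)..1, g' t = f (x + (1:ℝ) • (y - x)) - f (x + (0:ℝ) • (y - x)) :=
    integral_eq_sub_of_hasDerivAt (fun t _ => comp_line_hasDerivAt hgrad x y t) hint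
  simp only [one_smul, zero_smul, add_zero] at heq
  have hxy : x + (y - x) = y := by abel
  rw [hxy] at heq
  have hbound : ∀ t ∈ Set.Icc (0:ℝ) 1,
      g' t ≤ ⟪f' x, y - x⟫ + (L * ‖y - x‖ ^ 2) * t := by
    intro t ht
    have h1 : g' t - ⟪f' x, y - x⟫ = ⟪f' (x + t • (y - x)) - f' x, y - x⟫ := by
      rw [inner_sub_left]
    have h2 : ⟪f' (x + t • (y - x)) - f' x, y - x⟫ ≤
        ‖f' (x + t • (y - x)) - f' x‖ * ‖y - x‖ := real_inner_le_norm _ _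
    have h3 : ‖f' (x + t • (y - x)) - f' x‖ ≤ L * (t * ‖y - x‖) := by
      have := hlip (x + t • (y - x)) x
      have he : x + t • (y - x) - x = t • (y - x) := by abel
      rw [he, norm_smul, Real.norm_eq_abs, abs_of_nonneg ht.1] at this
      exact this
    have h4 : ‖f' (x + t • (y - x)) - f' x‖ * ‖y - x‖ ≤ L * (t * ‖y - x‖) * ‖y - x‖ := by
      gcongr
    nlinarith [h1, h2, h4]
  have hint2 : IntervalIntegrable (fun t => ⟪f' x, y - x⟫ + (L * ‖y - x‖ ^ 2) * t)
      MeasureTheory.volume 0 1 := (by continuity : Continuous _).intervalIntegrable 0 1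
  have hmono := integral_mono_on zero_le_one hint hint2 hbound
  rw [heq] at hmono
  have hcalc : ∫ t in (0:ℝ)..1, (⟪f' x, y - x⟫ + (L * ‖y - x‖ ^ 2) * t) =
      ⟪f' x, y - x⟫ + L / 2 * ‖y - x‖ ^ 2 := by
    rw [integral_add (intervalIntegrable_const)
      ((by continuity : Continuous fun t : ℝ => (L * ‖y - x‖ ^ 2) * t).intervalIntegrable 0 1),
      integral_const, integral_const_mul, integral_id]
    norm_num
    ring
  rw [hcalc] at hmono
  linarith

theorem stmt_7 (n : ℕ) (f : EuclideanSpace ℝ (Fin n) → ℝ)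
    (f' : EuclideanSpace ℝ (Fin n) → EuclideanSpace ℝ (Fin n))
    (hgrad : ∀ x, HasGradientAt f (f' x) x)
    (hconv : ConvexOn ℝ Set.univ f)
    (L : ℝ) (hL : 0 < L) (hlip : ∀ x y, ‖f' x - f' y‖ ≤ L * ‖x - y‖)
    (xstar : EuclideanSpace ℝ (Fin n)) (hmin : ∀ y, f xstar ≤ f y)
    (x : ℕ → EuclideanSpace ℝ (Fin n))
    (hx : ∀ k, x (k + 1) = x k - (1 / L) • f' (x k)) :
    ∀ k : ℕ, 1 ≤ k → f (x k) - f xstar ≤ L / (2 * k) * ‖x 0 - xstar‖ ^ 2 := by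
  set D : ℕ → ℝ := fun i => ‖x i - xstar‖ ^ 2 with hD
  -- per-step descent
  have hMain : ∀ i : ℕ, f (x (i + 1)) ≤ f (x i) - 1 / (2 * L) * ‖f' (x i)‖ ^ 2 := by
    intro i
    have hdes := descent_lemma hgrad hL hlip (x i) (x (i + 1))
    have hdiff : x (i + 1) - x i = -((1 / L) • f' (x i)) := by
      rw [hx i]; abel
    rw [hdiff] at hdes
    have hin : ⟪f' (x i), -((1 / L) • f' (x i))⟫ = -(1 / L) * ‖f' (x i)‖ ^ 2 := by
      rw [inner_neg_right, real_inner_smul_right, real_inner_self_eq_norm_sq]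
      ring
    have hn : ‖-((1 / L) • f' (x i))‖ ^ 2 = (1 / L) ^ 2 * ‖f' (x i)‖ ^ 2 := by
      rw [norm_neg, norm_smul, Real.norm_eq_abs, mul_pow, sq_abs]
    rw [hin, hn] at hdes
    have hL' : L ≠ 0 := ne_of_gt hL
    have h3 : -(1 / L) * ‖f' (x i)‖ ^ 2 + L / 2 * ((1 / L) ^ 2 * ‖f' (x i)‖ ^ 2)
        = -(1 / (2 * L)) * ‖f' (x i)‖ ^ 2 := by
      field_simp; ring
    linarith [hdes, h3]
  have hmono : ∀ i j : ℕ, i ≤ j → f (x j) ≤ f (x i) := by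
    intro i j hij
    induction j with
    | zero => simp_all
    | succ m ih =>
      rcases Nat.lt_or_ge i (m + 1) with h | h
      · have := ih (Nat.lt_succ_iff.mp h)
        have := hMain m
        have hsq : 0 ≤ ‖f' (x m)‖ ^ 2 := sq_nonneg _
        have hpos : 0 ≤ 1 / (2 * L) := by positivity
        nlinarith
      · have : i = m + 1 := le_antisymm hij h
        rw [this]
  -- key step inequality
  have hkey : ∀ i : ℕ, f (x (i + 1)) - f xstar ≤ L / 2 * (D i - D (i + 1)) := by
    intro i
    have hcv := convex_grad_ineq hgrad hconv (x i) xstar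
    have hDs : D (i + 1) = D i - 2 * (1 / L) * ⟪f' (x i), x i - xstar⟫
        + (1 / L) ^ 2 * ‖f' (x i)‖ ^ 2 := by
      have h1 : x (i + 1) - xstar = (x i - xstar) - (1 / L) • f' (x i) := by
        rw [hx i]; abel
      have h2 := @norm_sub_sq_real _ _ _ (x i - xstar) ((1 / L) • f' (x i))
      rw [hD]
      simp only []
      rw [h1, h2, real_inner_smul_right, norm_smul, Real.norm_eq_abs,
        real_inner_comm]
      rw [mul_pow, sq_abs]
      ring
    have hcv' : ⟪f' (x i), xstar - x i⟫ = -⟪f' (x i), x i - xstar⟫ := by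
      rw [← inner_neg_right]; congr 1; abel
    rw [hcv'] at hcv
    have hML := hMain i
    have hL' : L ≠ 0 := ne_of_gt hL
    have key1 : L / 2 * (D i - D (i + 1)) =
        ⟪f' (x i), x i - xstar⟫ - 1 / (2 * L) * ‖f' (x i)‖ ^ 2 := by
      rw [hDs]; field_simp; ring
    linarith
  -- telescoping sum
  intro k hk
  have hsum : ∀ m : ℕ, (∑ i ∈ Finset.range m, (f (x (i + 1)) - f xstar))
      ≤ L / 2 * (D 0 - D m) := by
    intro m
    calc (∑ i ∈ Finset.range m, (f (x (i + 1)) - f xstar))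
        ≤ ∑ i ∈ Finset.range m, L / 2 * (D i - D (i + 1)) :=
          Finset.sum_le_sum fun i _ => hkey i
      _ = L / 2 * ∑ i ∈ Finset.range m, (D i - D (i + 1)) := by
          rw [Finset.mul_sum]
      _ = L / 2 * (D 0 - D m) := by rw [Finset.sum_range_sub' D m]
  have hlower : (k : ℝ) * (f (x k) - f xstar) ≤
      ∑ i ∈ Finset.range k, (f (x (i + 1)) - f xstar) := by
    have : ∀ i ∈ Finset.range k, f (x k) - f xstar ≤ f (x (i + 1)) - f xstar := by
      intro i hi
      have := hmono (i + 1) k (Finset.mem_range.mp hi)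
      linarith
    calc (k : ℝ) * (f (x k) - f xstar)
        = ∑ _i ∈ Finset.range k, (f (x k) - f xstar) := by
          rw [Finset.sum_const, Finset.card_range, nsmul_eq_mul]
      _ ≤ _ := Finset.sum_le_sum this
  have hDk : 0 ≤ D k := sq_nonneg _
  have hfin : (k : ℝ) * (f (x k) - f xstar) ≤ L / 2 * D 0 := by
    have := hsum k
    nlinarith
  have hkpos : (0 : ℝ) < k := by exact_mod_cast hk
  have hrw : L / (2 * (k : ℝ)) * ‖x 0 - xstar‖ ^ 2 = (L / 2 * D 0) / k := by
    rw [hD]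
    field_simp
  rw [hrw, le_div_iff₀ hkpos]
  linarith [hfin]
end

section
/- Let f : ℝⁿ → ℝ be μ-strongly convex, differentiable, and L-smooth with minimizer x*, and let 0 < s ≤ 1/L with μs ≤ 1. Then the gradient descent iterates x_{k+1} = x_k − s·∇f(x_k) satisfy f(x_{k+1}) − f(x*) + (μ/2)‖x_{k+1} − x*‖² ≤ (1 − μs)·(f(x_k) − f(x*) + (μ/2)‖x_k − x*‖²) for all k ≥ 0. -/
open InnerProductSpace

local notation "⟪" x ", " y "⟫" => @inner ℝ _ _ x y

section aux

variable {E : Type*} [NormedAddCommGroup E] [InnerProductSpace ℝ E] [CompleteSpace E]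

/-- Derivative of `f` along a line. -/
lemma aux_line_deriv {f : E → ℝ} {g : E} (x v : E) (t₀ : ℝ)
    (hg : HasGradientAt f g (x + t₀ • v)) :
    HasDerivAt (fun t : ℝ => f (x + t • v)) ⟪g, v⟫ t₀ := by
  have hc : HasDerivAt (fun t : ℝ => x + t • v) v t₀ := by
    simpa using ((hasDerivAt_id t₀).smul_const v).const_add x
  have hf : HasFDerivAt f (toDual ℝ E g) (x + t₀ • v) :=
    hasGradientAt_iff_hasFDerivAt.1 hg
  have := hf.comp_hasDerivAt t₀ hc
  simp only [toDual_apply_apply] at this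
  exact this

/-- Gradient inequality for strongly convex functions. -/
lemma aux_sc {f : E → ℝ} {μ : ℝ} (hsc : StrongConvexOn Set.univ μ f)
    {x g : E} (hg : HasGradientAt f g x) (y : E) :
    f x + ⟪g, y - x⟫ + μ / 2 * ‖y - x‖ ^ 2 ≤ f y := by
  set v := y - x with hv
  have hderiv : HasDerivAt (fun t : ℝ => f (x + t • v)) ⟪g, v⟫ 0 :=
    aux_line_deriv x v 0 (by simpa using hg)
  -- slope inequality for t ∈ (0,1)
  have key : ∀ t : ℝ, t ∈ Set.Ioo (0:ℝ) 1 →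
      (f (x + t • v) - f x) / t ≤ f y - f x - (1 - t) * (μ / 2 * ‖v‖ ^ 2) := by
    intro t ht
    have h := hsc.2 (Set.mem_univ y) (Set.mem_univ x) ht.1.le (by linarith [ht.2])
      (by ring : t + (1 - t) = 1)
    have hxy : t • y + (1 - t) • x = x + t • v := by
      rw [hv]; module
    have hyx : ‖y - x‖ = ‖v‖ := rfl
    rw [hxy, hyx] at h
    rw [div_le_iff₀ ht.1]
    simp only [smul_eq_mul] at h
    nlinarith [h]
  -- take the limit t → 0⁺
  have hslope : Filter.Tendsto (fun t : ℝ => (f (x + t • v) - f x) / t)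
      (nhdsWithin 0 (Set.Ioi 0)) (nhds ⟪g, v⟫) := by
    have := hasDerivAt_iff_tendsto_slope.1 hderiv
    have h2 := this.mono_left (nhdsWithin_mono 0
      (fun t ht => Set.mem_compl_singleton_iff.2 (ne_of_gt ht)))
    refine h2.congr' ?_
    filter_upwards [self_mem_nhdsWithin] with t ht
    simp [slope_def_field, div_eq_inv_mul]
  have hrhs : Filter.Tendsto (fun t : ℝ => f y - f x - (1 - t) * (μ / 2 * ‖v‖ ^ 2))
      (nhdsWithin 0 (Set.Ioi 0)) (nhds (f y - f x - μ / 2 * ‖v‖ ^ 2)) := by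
    have : Filter.Tendsto (fun t : ℝ => f y - f x - (1 - t) * (μ / 2 * ‖v‖ ^ 2))
        (nhds 0) (nhds (f y - f x - (1 - 0) * (μ / 2 * ‖v‖ ^ 2))) := by
      apply Filter.Tendsto.sub tendsto_const_nhds
      exact (Filter.Tendsto.sub tendsto_const_nhds Filter.tendsto_id).mul_const _
    simpa using this.mono_left nhdsWithin_le_nhds
  have hle : ⟪g, v⟫ ≤ f y - f x - μ / 2 * ‖v‖ ^ 2 := by
    refine le_of_tendsto_of_tendsto hslope hrhs ?_
    filter_upwards [Ioo_mem_nhdsGT_of_mem (by norm_num : (0:ℝ) ∈ Set.Ico (0:ℝ) 1)] with t ht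
    exact key t ht
  linarith

/-- Descent lemma for functions with Lipschitz gradient. -/
lemma aux_descent {f : E → ℝ} {f' : E → E} (hgrad : ∀ x, HasGradientAt f (f' x) x)
    {L : ℝ} (hL : 0 ≤ L) (hlip : ∀ x y, ‖f' x - f' y‖ ≤ L * ‖x - y‖) (x y : E) :
    f y ≤ f x + ⟪f' x, y - x⟫ + L / 2 * ‖y - x‖ ^ 2 := by
  set v := y - x with hv
  have hcont : Continuous f' := by
    have : LipschitzWith (Real.toNNReal L) f' := by
      intro a b
      rw [edist_nndist, edist_nndist, ← ENNReal.coe_mul, ENNReal.coe_le_coe,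
        ← NNReal.coe_le_coe]
      push_cast
      calc dist (f' a) (f' b) = ‖f' a - f' b‖ := by rw [dist_eq_norm]
        _ ≤ L * ‖a - b‖ := hlip a b
        _ ≤ Real.toNNReal L * dist a b := by
            rw [dist_eq_norm]
            gcongr
            exact Real.le_coe_toNNReal L
    exact this.continuous
  have hderiv : ∀ t : ℝ, HasDerivAt (fun t : ℝ => f (x + t • v))
      ⟪f' (x + t • v), v⟫ t := fun t => aux_line_deriv x v t (hgrad _)
  have hcont' : Continuous fun t : ℝ => ⟪f' (x + t • v), v⟫ := by
    apply Continuous.inner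
    · exact hcont.comp (by continuity)
    · exact continuous_const
  have hint : IntervalIntegrable (fun t : ℝ => ⟪f' (x + t • v), v⟫)
      MeasureTheory.volume 0 1 := hcont'.intervalIntegrable 0 1
  have hftc : f y - f x = ∫ t in (0:ℝ)..1, ⟪f' (x + t • v), v⟫ := by
    have := intervalIntegral.integral_eq_sub_of_hasDerivAt
      (fun t _ => hderiv t) hint
    rw [this]
    norm_num [hv]
  have hbound : ∀ t ∈ Set.Icc (0:ℝ) 1,
      ⟪f' (x + t • v), v⟫ ≤ ⟪f' x, v⟫ + L * t * ‖v‖ ^ 2 := by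
    intro t ht
    have h1 : ⟪f' (x + t • v), v⟫ - ⟪f' x, v⟫ = ⟪f' (x + t • v) - f' x, v⟫ := by
      rw [inner_sub_left]
    have h2 : ⟪f' (x + t • v) - f' x, v⟫ ≤ ‖f' (x + t • v) - f' x‖ * ‖v‖ :=
      real_inner_le_norm _ _
    have h3 : ‖f' (x + t • v) - f' x‖ ≤ L * (t * ‖v‖) := by
      have := hlip (x + t • v) x
      simpa [norm_smul, abs_of_nonneg ht.1] using this
    nlinarith [norm_nonneg v, mul_le_mul_of_nonneg_right h3 (norm_nonneg v)]
  have hmono : (∫ t in (0:ℝ)..1, ⟪f' (x + t • v), v⟫) ≤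
      ∫ t in (0:ℝ)..1, (⟪f' x, v⟫ + L * t * ‖v‖ ^ 2) := by
    apply intervalIntegral.integral_mono_on (by norm_num) hint
    · exact (Continuous.intervalIntegrable (by continuity) 0 1)
    · exact hbound
  have hcalc : (∫ t in (0:ℝ)..1, (⟪f' x, v⟫ + L * t * ‖v‖ ^ 2)) =
      ⟪f' x, v⟫ + L / 2 * ‖v‖ ^ 2 := by
    rw [intervalIntegral.integral_add (intervalIntegrable_const)
      ((Continuous.intervalIntegrable (by continuity) 0 1))]
    simp only [intervalIntegral.integral_const]
    have : (∫ t in (0:ℝ)..1, L * t * ‖v‖ ^ 2) = L / 2 * ‖v‖ ^ 2 := by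
      have : (fun t : ℝ => L * t * ‖v‖ ^ 2) = fun t : ℝ => (L * ‖v‖ ^ 2) * t := by
        funext t; ring
      rw [this, intervalIntegral.integral_const_mul, integral_id]
      ring
    rw [this]
    simp
  linarith [hftc ▸ hmono.trans_eq hcalc]

end aux

theorem stmt_8 (n : ℕ) (f : EuclideanSpace ℝ (Fin n) → ℝ)
    (f' : EuclideanSpace ℝ (Fin n) → EuclideanSpace ℝ (Fin n))
    (hgrad : ∀ x, HasGradientAt f (f' x) x)
    (μ : ℝ) (hμ : 0 < μ) (hsc : StrongConvexOn Set.univ μ f)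
    (L : ℝ) (hlip : ∀ x y, ‖f' x - f' y‖ ≤ L * ‖x - y‖)
    (xstar : EuclideanSpace ℝ (Fin n)) (hmin : ∀ y, f xstar ≤ f y)
    (s : ℝ) (hs0 : 0 < s) (hsL : s ≤ 1 / L) (hμs : μ * s ≤ 1)
    (x : ℕ → EuclideanSpace ℝ (Fin n))
    (hx : ∀ k, x (k + 1) = x k - s • f' (x k)) :
    ∀ k : ℕ,
      f (x (k + 1)) - f xstar + μ / 2 * ‖x (k + 1) - xstar‖ ^ 2 ≤
        (1 - μ * s) * (f (x k) - f xstar + μ / 2 * ‖x k - xstar‖ ^ 2) := by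
  have hL : 0 < L := by
    by_contra h
    push_neg at h
    rcases eq_or_lt_of_le h with h | h
    · rw [h, div_zero] at hsL; linarith
    · have : 1 / L < 0 := div_neg_of_pos_of_neg one_pos h
      linarith
  have hLs : L * s ≤ 1 := by
    rw [le_div_iff₀ hL] at hsL
    linarith
  intro k
  set a := x k with ha
  set g := f' a with hg
  have hb : x (k + 1) = a - s • g := hx k
  -- descent lemma
  have hdesc : f (a - s • g) ≤ f a - s / 2 * ‖g‖ ^ 2 := by
    have h := aux_descent hgrad hL.le hlip a (a - s • g)
    have h1 : (a - s • g) - a = -(s • g) := by abel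
    rw [h1] at h
    have h2 : ⟪g, -(s • g)⟫ = -(s * ‖g‖ ^ 2) := by
      rw [inner_neg_right, inner_smul_right, real_inner_self_eq_norm_sq]
    have h3 : ‖-(s • g)‖ ^ 2 = s ^ 2 * ‖g‖ ^ 2 := by
      rw [norm_neg, norm_smul, mul_pow]
      simp [abs_of_pos hs0]
    rw [h2, h3] at h
    nlinarith [sq_nonneg ‖g‖, mul_nonneg (mul_nonneg hs0.le hs0.le) (sq_nonneg ‖g‖)]
  -- strong convexity at a
  have hsc1 : f a + ⟪g, xstar - a⟫ + μ / 2 * ‖xstar - a‖ ^ 2 ≤ f xstar :=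
    aux_sc hsc (hgrad a) xstar
  have hI : f a - f xstar + μ / 2 * ‖a - xstar‖ ^ 2 ≤ ⟪g, a - xstar⟫ := by
    have h1 : ⟪g, xstar - a⟫ = -⟪g, a - xstar⟫ := by
      rw [← inner_neg_right]; congr 1; abel
    have h2 : ‖xstar - a‖ = ‖a - xstar‖ := norm_sub_rev _ _
    rw [h1, h2] at hsc1
    linarith
  -- norm expansion
  have hnorm : ‖(a - s • g) - xstar‖ ^ 2 =
      ‖a - xstar‖ ^ 2 - 2 * s * ⟪g, a - xstar⟫ + s ^ 2 * ‖g‖ ^ 2 := by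
    have h0 : (a - s • g) - xstar = (a - xstar) - s • g := by abel
    rw [h0, norm_sub_sq_real, inner_smul_right, real_inner_comm, norm_smul]
    simp [abs_of_pos hs0]
    ring
  rw [hb, hnorm]
  set A := f a - f xstar with hA
  set N := ‖a - xstar‖ ^ 2 with hN
  set G := ‖g‖ ^ 2 with hG
  set I := ⟪g, a - xstar⟫ with hI'
  have hA0 : 0 ≤ A := by rw [hA]; linarith [hmin a]
  have hN0 : 0 ≤ N := sq_nonneg _
  have hG0 : 0 ≤ G := sq_nonneg _
  have key1 : f (a - s • g) - f xstar ≤ A - s / 2 * G := by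
    rw [hA]; linarith
  nlinarith [mul_le_mul_of_nonneg_left hI (mul_nonneg hμ.le hs0.le),
    mul_nonneg (mul_nonneg hs0.le (by linarith : 0 ≤ 1 - μ * s)) hG0]
end

section
/- Let f : ℝⁿ → ℝ be convex, differentiable, and L-smooth with minimizer x*. Let ξ ≥ 1, T ≥ 0, λ_k = (k + 2ξ + T)/2, and 0 < s ≤ 1/L. Consider the iteration y_k = x_k + (ξ/(λ_k + ξ − 1))·(z_k − x_k), x_{k+1} = y_k − s·∇f(y_k), z_{k+1} = z_k − (s·λ_k/ξ)·∇f(y_k), started from x_0 = z_0. Define φ_k = s·λ_{k−1}²·(f(x_k) − f(x*)) + (ξ²/2)·‖z_k − x*‖². Then φ_{k+1} ≤ φ_k for all k ≥ 0. -/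
open RealInnerProductSpace

section Aux

variable {E : Type*} [NormedAddCommGroup E] [InnerProductSpace ℝ E] [CompleteSpace E]

theorem stmt9_line_deriv (f : E → ℝ) (g : E) (x v : E) (t : ℝ)
    (h : HasGradientAt f g (x + t • v)) :
    HasDerivAt (fun t : ℝ => f (x + t • v)) ⟪g, v⟫ t := by
  have hc : HasDerivAt (fun t : ℝ => x + t • v) v t := by
    simpa using ((hasDerivAt_id t).smul_const v).const_add x
  have := h.hasFDerivAt.comp_hasDerivAt t hc
  exact this

theorem stmt9_conv_grad_ineq (f : E → ℝ) (f' : E → E) (hgrad : ∀ x, HasGradientAt f (f' x) x)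
    (hconv : ConvexOn ℝ Set.univ f) (x v : E) :
    f x + ⟪f' x, v - x⟫ ≤ f v := by
  set w := v - x with hw
  have hd : HasDerivAt (fun t : ℝ => f (x + t • w)) ⟪f' x, w⟫ 0 := by
    have := stmt9_line_deriv f (f' x) x w 0 (by simpa using hgrad x)
    exact this
  have hslope : ∀ t : ℝ, t ∈ Set.Ioc (0:ℝ) 1 → (f (x + t • w) - f x)/t ≤ f v - f x := by
    intro t ht
    have h1 : f (x + t • w) ≤ (1 - t) * f x + t * f v := by
      have := hconv.2 (Set.mem_univ x) (Set.mem_univ v) (by linarith [ht.2] : (0:ℝ) ≤ 1 - t)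
        (le_of_lt ht.1) (by ring)
      have hxy : (1 - t) • x + t • v = x + t • w := by
        rw [hw]; module
      rw [hxy] at this
      simpa using this
    rw [div_le_iff₀ ht.1]
    nlinarith [ht.1]
  have htend : Filter.Tendsto (fun t : ℝ => (f (x + t • w) - f x)/t) (nhdsWithin 0 (Set.Ioi 0))
      (nhds ⟪f' x, w⟫) := by
    have := hd.tendsto_slope_zero_right
    simpa [div_eq_inv_mul] using this
  have : ⟪f' x, w⟫ ≤ f v - f x := by
    refine le_of_tendsto htend ?_
    filter_upwards [Ioc_mem_nhdsGT_of_mem (Set.left_mem_Ico.2 one_pos)] with t ht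
    exact hslope t ht
  linarith

theorem stmt9_descent_lemma (f : E → ℝ) (f' : E → E) (hgrad : ∀ x, HasGradientAt f (f' x) x)
    (L : ℝ) (hlip : ∀ x y, ‖f' x - f' y‖ ≤ L * ‖x - y‖) (x v : E) :
    f (x + v) ≤ f x + ⟪f' x, v⟫ + L / 2 * ‖v‖ ^ 2 := by
  set c : ℝ := ⟪f' x, v⟫ with hc
  set h : ℝ → ℝ := fun t => f (x + t • v) - t * c - L * t ^ 2 / 2 * ‖v‖ ^ 2 with hh
  have hd : ∀ t : ℝ, HasDerivAt h (⟪f' (x + t • v), v⟫ - c - L * t * ‖v‖ ^ 2) t := by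
    intro t
    have h1 := stmt9_line_deriv f (f' (x + t • v)) x v t (hgrad _)
    have h2 : HasDerivAt (fun t : ℝ => t * c) c t := by simpa using (hasDerivAt_id t).mul_const c
    have h3 : HasDerivAt (fun t : ℝ => L * t ^ 2 / 2 * ‖v‖ ^ 2) (L * t * ‖v‖ ^ 2) t := by
      have : HasDerivAt (fun t : ℝ => t ^ 2) (2 * t) t := by
        simpa using hasDerivAt_pow 2 t
      have := ((this.const_mul L).div_const 2).mul_const (‖v‖ ^ 2)
      rw [show L * t * ‖v‖ ^ 2 = L * (2 * t) / 2 * ‖v‖ ^ 2 by ring]; exact this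
    exact (h1.sub h2).sub h3
  have hanti : AntitoneOn h (Set.Icc (0:ℝ) 1) := by
    apply antitoneOn_of_deriv_nonpos (convex_Icc 0 1)
    · exact fun t _ => (hd t).differentiableAt.continuousAt.continuousWithinAt
    · exact fun t _ => (hd t).differentiableAt.differentiableWithinAt
    · intro t ht
      rw [interior_Icc] at ht
      rw [(hd t).deriv]
      have hb : ⟪f' (x + t • v) - f' x, v⟫ ≤ L * t * ‖v‖ ^ 2 := by
        calc ⟪f' (x + t • v) - f' x, v⟫ ≤ ‖f' (x + t • v) - f' x‖ * ‖v‖ :=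
              real_inner_le_norm _ _
          _ ≤ (L * ‖(x + t • v) - x‖) * ‖v‖ := by
              gcongr; exact hlip _ _
          _ = L * (|t| * ‖v‖) * ‖v‖ := by
              congr 2; simp [norm_smul, Real.norm_eq_abs]
          _ = L * t * ‖v‖ ^ 2 := by rw [abs_of_pos ht.1]; ring
      have : ⟪f' (x + t • v), v⟫ - c = ⟪f' (x + t • v) - f' x, v⟫ := by
        rw [inner_sub_left]
      linarith
  have := hanti (Set.left_mem_Icc.2 zero_le_one) (Set.right_mem_Icc.2 zero_le_one) zero_le_one
  simp only [hh] at this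
  simp only [one_smul, zero_smul, add_zero] at this
  nlinarith [this]

end Aux

set_option maxHeartbeats 1600000 in
theorem stmt_9 (n : ℕ) (f : EuclideanSpace ℝ (Fin n) → ℝ)
    (f' : EuclideanSpace ℝ (Fin n) → EuclideanSpace ℝ (Fin n))
    (hgrad : ∀ x, HasGradientAt f (f' x) x)
    (hconv : ConvexOn ℝ Set.univ f)
    (L : ℝ) (hlip : ∀ x y, ‖f' x - f' y‖ ≤ L * ‖x - y‖)
    (xstar : EuclideanSpace ℝ (Fin n)) (hmin : ∀ y, f xstar ≤ f y)
    (ξ T : ℝ) (hξ : 1 ≤ ξ) (hT : 0 ≤ T)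
    (lam : ℤ → ℝ) (hlam : ∀ k : ℤ, lam k = ((k : ℝ) + 2 * ξ + T) / 2)
    (s : ℝ) (hs0 : 0 < s) (hsL : s ≤ 1 / L)
    (x y z : ℕ → EuclideanSpace ℝ (Fin n))
    (hinit : x 0 = z 0)
    (hy : ∀ k, y k = x k + (ξ / (lam k + ξ - 1)) • (z k - x k))
    (hx : ∀ k, x (k + 1) = y k - s • f' (y k))
    (hz : ∀ k, z (k + 1) = z k - (s * lam k / ξ) • f' (y k))
    (φ : ℕ → ℝ)
    (hφ : ∀ k : ℕ, φ k =
      s * lam ((k : ℤ) - 1) ^ 2 * (f (x k) - f xstar) + ξ ^ 2 / 2 * ‖z k - xstar‖ ^ 2) :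
    ∀ k, φ (k + 1) ≤ φ k := by
  -- basic facts about L and s
  have hL : 0 < L := by
    by_contra h
    push_neg at h
    have : (1:ℝ)/L ≤ 0 := one_div_nonpos.mpr h
    linarith
  have hsL' : L * s ≤ 1 := by
    have h1 : s * L ≤ 1 := (le_div_iff₀ hL).mp hsL
    linarith [mul_comm s L, h1]
  have hξ0 : (0:ℝ) < ξ := by linarith
  intro k
  -- abbreviations
  set l : ℝ := lam (k : ℤ) with hldef
  have hlval : l = ((k : ℝ) + 2 * ξ + T) / 2 := by rw [hldef, hlam]; push_cast; ring
  have hk0 : (0:ℝ) ≤ (k : ℝ) := Nat.cast_nonneg k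
  have hl1 : 1 ≤ l := by rw [hlval]; linarith
  have hlξ : ξ ≤ l := by rw [hlval]; linarith
  have hl'val : lam ((k : ℤ) - 1) = l - 1/2 := by
    rw [hlam, hlval]; push_cast; ring
  set g : EuclideanSpace ℝ (Fin n) := f' (y k) with hgdef
  set A : ℝ := f (y k) - f xstar with hA
  set B : ℝ := f (x k) - f xstar with hB
  set C1 : ℝ := ⟪g, y k - x k⟫ with hC1def
  set C2 : ℝ := ⟪g, y k - xstar⟫ with hC2def
  set G : ℝ := ‖g‖ ^ 2 with hGdef
  have hAnn : 0 ≤ A := by rw [hA]; linarith [hmin (y k)]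
  have hBnn : 0 ≤ B := by rw [hB]; linarith [hmin (x k)]
  have hGnn : 0 ≤ G := by rw [hGdef]; positivity
  -- convexity inequalities
  have hC1 : A - B ≤ C1 := by
    have := stmt9_conv_grad_ineq f f' hgrad hconv (y k) (x k)
    have h2 : ⟪g, x k - y k⟫ = -C1 := by
      rw [hC1def, ← inner_neg_right]; congr 1; abel
    rw [h2] at this
    rw [hA, hB]; linarith
  have hC2 : A ≤ C2 := by
    have := stmt9_conv_grad_ineq f f' hgrad hconv (y k) xstar
    have h2 : ⟪g, xstar - y k⟫ = -C2 := by
      rw [hC2def, ← inner_neg_right]; congr 1; abel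
    rw [h2] at this
    rw [hA]; linarith
  -- descent step
  have hF1 : f (x (k + 1)) - f xstar ≤ A - s/2 * G := by
    have hd := stmt9_descent_lemma f f' hgrad L hlip (y k) (-(s • g))
    have hpt : y k + -(s • g) = x (k + 1) := by rw [hx k, hgdef]; abel
    rw [hpt] at hd
    have hi : ⟪f' (y k), -(s • g)⟫ = -(s * G) := by
      rw [← hgdef, inner_neg_right, real_inner_smul_right, real_inner_self_eq_norm_sq, hGdef]
    have hn : ‖-(s • g)‖ ^ 2 = s ^ 2 * G := by
      rw [norm_neg, norm_smul, mul_pow, hGdef, Real.norm_eq_abs, sq_abs]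
    rw [hi, hn] at hd
    have hprod : 0 ≤ (1 - L * s) * (s * G) := by
      apply mul_nonneg (by linarith) (mul_nonneg hs0.le hGnn)
    rw [hA]
    nlinarith [hd, hprod]
  -- vector relation for z k
  have hlξ1 : (0:ℝ) < l + ξ - 1 := by linarith
  have hyx : y k - x k = (ξ / (l + ξ - 1)) • (z k - x k) := by
    rw [hy k, ← hldef]; abel
  have hzx : z k - x k = ((l + ξ - 1) / ξ) • (y k - x k) := by
    rw [hyx, smul_smul]
    rw [show (l + ξ - 1) / ξ * (ξ / (l + ξ - 1)) = 1 by field_simp]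
    rw [one_smul]
  have hrel : z k - xstar = ((l - 1) / ξ) • (y k - x k) + (y k - xstar) := by
    have h1 : z k - xstar = (z k - x k) - (y k - x k) + (y k - xstar) := by abel
    have hco : (l - 1) / ξ = (l + ξ - 1) / ξ - 1 := by
      field_simp
      ring
    rw [h1, hzx, hco, sub_smul, one_smul]
  have hinner : ⟪g, z k - xstar⟫ = (l - 1) / ξ * C1 + C2 := by
    rw [hrel, inner_add_right, real_inner_smul_right, hC1def, hC2def]
  -- norm expansion
  have hexp : ‖z (k + 1) - xstar‖ ^ 2 =
      ‖z k - xstar‖ ^ 2 - 2 * (s * l / ξ) * ((l - 1) / ξ * C1 + C2) + (s * l / ξ) ^ 2 * G := by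
    have h1 : z (k + 1) - xstar = (z k - xstar) - (s * l / ξ) • g := by
      rw [hz k, ← hldef, hgdef]; abel
    have hizg : ⟪z k - xstar, (s * l / ξ) • g⟫ = (s * l / ξ) * ((l - 1) / ξ * C1 + C2) := by
      rw [real_inner_smul_right, real_inner_comm, hinner]
    have hns : ‖(s * l / ξ) • g‖ ^ 2 = (s * l / ξ) ^ 2 * G := by
      rw [norm_smul, mul_pow, Real.norm_eq_abs, sq_abs, hGdef]
    rw [h1, norm_sub_sq_real, hizg, hns]
    ring
  have hexp' : ξ ^ 2 / 2 * ‖z (k + 1) - xstar‖ ^ 2 =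
      ξ ^ 2 / 2 * ‖z k - xstar‖ ^ 2 - s * l * (l - 1) * C1 - s * l * ξ * C2
        + s ^ 2 * l ^ 2 / 2 * G := by
    rw [hexp]
    have hsc : ∀ N0 : ℝ, ξ ^ 2 / 2 * (N0 - 2 * (s * l / ξ) * ((l - 1) / ξ * C1 + C2)
        + (s * l / ξ) ^ 2 * G) = ξ ^ 2 / 2 * N0 - s * l * (l - 1) * C1 - s * l * ξ * C2
        + s ^ 2 * l ^ 2 / 2 * G := by
      intro N0; field_simp; ring
    exact hsc _
  clear_value l g A B C1 C2 G
  -- key scalar inequality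
  have key : l ^ 2 * A ≤ (l - 1/2) ^ 2 * B + l * (l - 1) * C1 + l * ξ * C2 := by
    have h1 : l * (l - 1) * (A - B) ≤ l * (l - 1) * C1 :=
      mul_le_mul_of_nonneg_left hC1 (mul_nonneg (by linarith) (by linarith))
    have h2 : l * ξ * A ≤ l * ξ * C2 :=
      mul_le_mul_of_nonneg_left hC2 (mul_nonneg (by linarith) (by linarith))
    have h3 : 0 ≤ l * (ξ - 1) * A := by
      apply mul_nonneg (mul_nonneg (by linarith) (by linarith)) hAnn
    nlinarith [h1, h2, h3, hBnn]
  -- put it together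
  have key' := mul_le_mul_of_nonneg_left key hs0.le
  have hF1' := mul_le_mul_of_nonneg_left hF1 (by positivity : (0:ℝ) ≤ s * l ^ 2)
  have hcast : ((k : ℤ) + 1) - 1 = (k : ℤ) := by ring
  have hφ1 : φ (k + 1) = s * l ^ 2 * (f (x (k + 1)) - f xstar)
      + ξ ^ 2 / 2 * ‖z (k + 1) - xstar‖ ^ 2 := by
    rw [hφ (k + 1)]
    have : ((k + 1 : ℕ) : ℤ) - 1 = (k : ℤ) := by push_cast; ring
    rw [this, ← hldef]
  have hφ0 : φ k = s * (l - 1/2) ^ 2 * B + ξ ^ 2 / 2 * ‖z k - xstar‖ ^ 2 := by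
    rw [hφ k, hl'val, hB]
  rw [hφ1, hφ0, hexp']
  nlinarith [key', hF1']
end
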